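/- Let g be the infimal convolution of polyhedral convex functions g¹,…,g^K. If (w, g(w)) is an extreme point of epi(g), and (w^k) is any decomposition with Σ w^k = w and Σ g^k(w^k) = g(w), then each (w^k, g^k(w^k)) is an extreme point of epi(g^k). -/

import Mathlib

noncomputable section
open Set

abbrev V (n : ℕ) := EuclideanSpace ℝ (Fin n)

/-- A polyhedron: finite intersection of closed half-spaces. -/
def IsPolyhedron {E : Type*} [AddCommGroup E] [Module ℝ E] (P : Set E) : Prop :=
  ∃ (m : ℕ) (L : Fin m → E →ₗ[ℝ] ℝ) (b : Fin m → ℝ), P = {x | ∀ i, L i x ≤ b i}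

/-- Epigraph of a real-valued function. -/
def epi {n : ℕ} (g : V n → ℝ) : Set (V n × ℝ) := {p | g p.1 ≤ p.2}

/-- if `(w, g w)` is an extreme point of `epi g`, `g` the
(attained) infimal convolution of polyhedral convex `g^k`, then every optimal
decomposition of `w` consists of extreme points of the `epi (g^k)`. -/
theorem stmt11 (n K : ℕ) (gk : Fin K → V n → ℝ)
    (hconv : ∀ k, ConvexOn ℝ univ (gk k))
    (hpoly : ∀ k, IsPolyhedron (epi (gk k)))
    (g : V n → ℝ)
    (hg : ∀ w : V n, IsLeast
      {s | ∃ W : Fin K → V n, (∑ k, W k) = w ∧ s = ∑ k, gk k (W k)} (g w))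
    (w : V n)
    (hext : (w, g w) ∈ Set.extremePoints ℝ (epi g))
    (W : Fin K → V n)
    (hsum : (∑ k, W k) = w) (hval : (∑ k, gk k (W k)) = g w) :
    ∀ k, (W k, gk k (W k)) ∈ Set.extremePoints ℝ (epi (gk k)) := by

  intro k0
  have hlow : ∀ W' : Fin K → V n, g (∑ k, W' k) ≤ ∑ k, gk k (W' k) := fun W' =>
    (hg _).2 ⟨W', rfl, rfl⟩
  refine mem_extremePoints.2 ⟨show gk k0 (W k0) ≤ gk k0 (W k0) from le_refl _, ?_⟩
  intro p₁ hp₁ p₂ hp₂ hseg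
  obtain ⟨a, b, ha, hb, hab, habx⟩ := hseg
  set S : ℝ := ∑ k ∈ Finset.univ.erase k0, gk k (W k) with hS
  set t : V n := ∑ k ∈ Finset.univ.erase k0, W k with ht
  have hsplitg : gk k0 (W k0) + S = g w := by
    rw [hS]
    exact (Finset.add_sum_erase _ (fun k => gk k (W k)) (Finset.mem_univ k0)).trans hval
  have hsplitw : W k0 + t = w := by
    rw [ht]
    exact (Finset.add_sum_erase _ W (Finset.mem_univ k0)).trans hsum
  have key : ∀ p : V n × ℝ, p ∈ epi (gk k0) → (p.1 + t, p.2 + S) ∈ epi g := by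
    intro p hp
    have h1 : (∑ k, Function.update W k0 p.1 k) = p.1 + t := by
      rw [Finset.sum_update_of_mem (Finset.mem_univ k0), ht,
        Finset.sdiff_singleton_eq_erase]
    have h2 : (∑ k, gk k (Function.update W k0 p.1 k)) = gk k0 p.1 + S := by
      rw [show (fun k => gk k (Function.update W k0 p.1 k))
          = Function.update (fun k => gk k (W k)) k0 (gk k0 p.1) from ?_,
        Finset.sum_update_of_mem (Finset.mem_univ k0), hS,
        Finset.sdiff_singleton_eq_erase]
      · funext j
        by_cases hj : j = k0
        · subst hj; simp
        · simp [Function.update_of_ne hj]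
    have := hlow (Function.update W k0 p.1)
    rw [h1, h2] at this
    exact this.trans (by exact add_le_add_left (show gk k0 p.1 ≤ p.2 from hp) _)
  have hq₁ := key p₁ hp₁
  have hq₂ := key p₂ hp₂
  have hx1 : a • p₁.1 + b • p₂.1 = W k0 := congrArg Prod.fst habx
  have hx2 : a * p₁.2 + b * p₂.2 = gk k0 (W k0) := congrArg Prod.snd habx
  have hmid : (w, g w) ∈ openSegment ℝ ((p₁.1 + t, p₁.2 + S) : V n × ℝ)
      (p₂.1 + t, p₂.2 + S) := by
    refine ⟨a, b, ha, hb, hab, ?_⟩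
    have e1 : a • (p₁.1 + t) + b • (p₂.1 + t) = w := by
      rw [smul_add, smul_add, show a • p₁.1 + a • t + (b • p₂.1 + b • t)
          = (a • p₁.1 + b • p₂.1) + (a + b) • t by module, hx1, hab, one_smul,
        hsplitw]
    have e2 : a * (p₁.2 + S) + b * (p₂.2 + S) = g w := by
      have : a * (p₁.2 + S) + b * (p₂.2 + S)
          = (a * p₁.2 + b * p₂.2) + (a + b) * S := by ring
      rw [this, hx2, hab, one_mul, hsplitg]
    exact Prod.ext e1 e2
  obtain ⟨hq1eq, hq2eq⟩ := (mem_extremePoints.1 hext).2 _ hq₁ _ hq₂ hmid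
  have r1 : p₁.1 = W k0 := by
    have := congrArg Prod.fst hq1eq
    simp only [Prod.fst] at this
    have : p₁.1 + t = w := this
    have := hsplitw
    linear_combination (norm := module) ‹p₁.1 + t = w› - hsplitw
  have r2 : p₂.1 = W k0 := by
    have h : p₂.1 + t = w := congrArg Prod.fst hq2eq
    linear_combination (norm := module) h - hsplitw
  have s1 : p₁.2 = gk k0 (W k0) := by
    have h : p₁.2 + S = g w := congrArg Prod.snd hq1eq
    linarith [hsplitg]
  have s2 : p₂.2 = gk k0 (W k0) := by
    have h : p₂.2 + S = g w := congrArg Prod.snd hq2eq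
    linarith [hsplitg]
  exact ⟨Prod.ext r1 s1, Prod.ext r2 s2⟩
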